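/- Let X be a real Banach space with a semi-normalized Markushevich basis (e_i, e*_i), let 0 < s ≤ 1, and let n = (n_k) be a strictly increasing sequence of positive integers. Suppose the basis is C-n-s-quasi-greedy with constant C = C_{q,s} ≥ 1. Then for every t with s·(1 − 1/C) < t < s, the basis is n-t-quasi-greedy with constant at most C·t / (s − C·(s − t)); that is, for every x ∈ X and every t-greedy set A for x with |A| ∈ {n_k : k ∈ ℕ}, one has ‖P_A(x)‖ ≤ (C·t / (s − C·(s − t)))·‖x‖. -/

import Mathlib

open Finset

/-- Coordinate projection `P_A x = ∑_{i ∈ A} e*_i(x) • e_i`. -/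
noncomputable def proj {X : Type*} [NormedAddCommGroup X] [NormedSpace ℝ X]
    (e : ℕ → X) (f : ℕ → X →L[ℝ] ℝ) (A : Finset ℕ) (x : X) : X :=
  ∑ i ∈ A, f i x • e i

/-- `A` is a `t`-greedy set for `x`:
`min_{i ∈ A} |e*_i(x)| ≥ t · sup_{j ∉ A} |e*_j(x)|`. -/
def IsGreedySet {X : Type*} [NormedAddCommGroup X] [NormedSpace ℝ X]
    (f : ℕ → X →L[ℝ] ℝ) (t : ℝ) (x : X) (A : Finset ℕ) : Prop :=
  ∀ i ∈ A, ∀ j ∉ A, t * |f j x| ≤ |f i x|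

/-- If a semi-normalized Markushevich basis of a Banach space is
`C`-`n`-`s`-quasi-greedy (`C ≥ 1`), then for every `t` with `s(1 - 1/C) < t < s`
it is `n`-`t`-quasi-greedy with constant at most `C·t / (s - C·(s - t))`. -/
theorem stmt_1 {X : Type*} [NormedAddCommGroup X] [NormedSpace ℝ X] [CompleteSpace X]
    (e : ℕ → X) (f : ℕ → X →L[ℝ] ℝ)
    (hdense : Dense (Submodule.span ℝ (Set.range e) : Set X))
    (hbio : ∀ k i, f k (e i) = if k = i then 1 else 0)
    (htotal : ∀ x : X, (∀ i, f i x = 0) → x = 0)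
    (hb1 : BddAbove (Set.range fun i => ‖e i‖))
    (hb2 : BddAbove (Set.range fun i => ‖f i‖))
    (s : ℝ) (hs0 : 0 < s) (hs1 : s ≤ 1)
    (n : ℕ → ℕ) (hn : StrictMono n) (hnpos : ∀ k, 0 < n k)
    (C : ℝ) (hC : 1 ≤ C)
    (hqg : ∀ (x : X) (A : Finset ℕ), IsGreedySet f s x A → (∃ k, A.card = n k) →
      ‖proj e f A x‖ ≤ C * ‖x‖) :
    ∀ t : ℝ, s * (1 - 1 / C) < t → t < s →
      ∀ (x : X) (A : Finset ℕ), IsGreedySet f t x A → (∃ k, A.card = n k) →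
        ‖proj e f A x‖ ≤ (C * t / (s - C * (s - t))) * ‖x‖ := by
  intro t ht1 ht2 x A hA hcard
  have hC0 : (0:ℝ) < C := lt_of_lt_of_le one_pos hC
  have ht0 : 0 < t := by
    have h1 : 1 / C ≤ 1 := by rw [div_le_one hC0]; exact hC
    nlinarith
  have hd : 0 < s - C * (s - t) := by
    have h := mul_lt_mul_of_pos_left ht1 hC0
    have hCne : C ≠ 0 := ne_of_gt hC0
    field_simp at h
    nlinarith
  set μ := (s - t) / t with hμdef
  have hμ0 : 0 ≤ μ := div_nonneg (by linarith) ht0.le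
  have h1μ : 1 + μ = s / t := by rw [hμdef]; field_simp; ring
  set P := proj e f A x with hP
  set y := x + μ • P with hy
  have hfP : ∀ j, f j P = if j ∈ A then f j x else 0 := by
    intro j
    have : f j P = ∑ i ∈ A, f i x * f j (e i) := by
      simp [hP, proj, map_sum, map_smul, smul_eq_mul]
    rw [this]
    simp_rw [hbio, mul_ite, mul_one, mul_zero]
    exact Finset.sum_ite_eq A j (fun i => f i x)
  have hfy : ∀ j, f j y = f j x + μ * f j P := by
    intro j; simp [hy, map_add, map_smul, smul_eq_mul]
  have hyA : ∀ j ∈ A, f j y = (1 + μ) * f j x := by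
    intro j hj; rw [hfy, hfP, if_pos hj]; ring
  have hyA' : ∀ j ∉ A, f j y = f j x := by
    intro j hj; rw [hfy, hfP, if_neg hj]; ring
  have hgy : IsGreedySet f s y A := by
    intro i hi j hj
    rw [hyA i hi, hyA' j hj, abs_mul, abs_of_nonneg (by linarith : (0:ℝ) ≤ 1 + μ), h1μ]
    have h := hA i hi j hj
    calc s * |f j x| = (s / t) * (t * |f j x|) := by field_simp
      _ ≤ (s / t) * |f i x| :=
        mul_le_mul_of_nonneg_left h (div_nonneg hs0.le ht0.le)
  have hPy : proj e f A y = (1 + μ) • P := by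
    rw [hP, proj, proj, Finset.smul_sum]
    refine Finset.sum_congr rfl fun i hi => ?_
    rw [hyA i hi, smul_smul]
  have hbound := hqg y A hgy hcard
  rw [hPy, norm_smul, Real.norm_eq_abs, abs_of_nonneg (by linarith : (0:ℝ) ≤ 1 + μ)] at hbound
  have hyn : ‖y‖ ≤ ‖x‖ + μ * ‖P‖ := by
    calc ‖y‖ ≤ ‖x‖ + ‖μ • P‖ := norm_add_le _ _
      _ = ‖x‖ + μ * ‖P‖ := by
          rw [norm_smul, Real.norm_eq_abs, abs_of_nonneg hμ0]
  have key : (1 + μ) * ‖P‖ ≤ C * (‖x‖ + μ * ‖P‖) :=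
    le_trans hbound (mul_le_mul_of_nonneg_left hyn hC0.le)
  have h := mul_le_mul_of_nonneg_right key ht0.le
  have e1 : (1 + μ) * ‖P‖ * t = s * ‖P‖ := by rw [hμdef]; field_simp; ring
  have e2 : C * (‖x‖ + μ * ‖P‖) * t = C * t * ‖x‖ + C * (s - t) * ‖P‖ := by
    rw [hμdef]; field_simp
  rw [e1, e2] at h
  rw [div_mul_eq_mul_div, le_div_iff₀ hd]
  have e3 : ‖P‖ * (s - C * (s - t)) = s * ‖P‖ - C * (s - t) * ‖P‖ := by ring
  linarith
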